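/- For any L > 0 and each B ∈ [B₂, B̄), there exists a unique A*(B) ∈ (A̲(B), Ā(B)] such that Λ₂(A*(B), B) = L. -/

import Mathlib

set_option linter.unusedSectionVars false
set_option maxHeartbeats 1000000


open MeasureTheory Set Filter Topology

noncomputable def gfun (μ σ a : ℝ) (h : ℝ → ℝ) (A B x : ℝ) : ℝ :=
  A - B * Real.exp (-(2 * μ / σ ^ 2) * (x - a)) -
    (2 * μ / σ ^ 2) / μ * ∫ y in a..x, h y * Real.exp (-(2 * μ / σ ^ 2) * (x - y))

noncomputable def F1 (μ σ a : ℝ) (h : ℝ → ℝ) (B x : ℝ) : ℝ :=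
  B - 1 / μ * ∫ y in a..x, deriv h y * Real.exp ((2 * μ / σ ^ 2) * (y - a))

noncomputable def Bbar (μ σ a : ℝ) (h : ℝ → ℝ) : ℝ :=
  -(1 / μ) * ∫ y in Set.Iic a, deriv h y * Real.exp ((2 * μ / σ ^ 2) * (y - a))

structure Hyp (μ σ a : ℝ) (h : ℝ → ℝ) : Prop where
  hμ : 0 < μ
  hσ : 0 < σ
  hconv : ConvexOn ℝ Set.univ h
  hcont : Continuous h
  hnonneg : ∀ x, 0 ≤ h x
  ha : h a = 0
  hC2 : ∀ x : ℝ, x ≠ a → ContDiffAt ℝ 2 h x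
  hneg : ∀ x, x < a → deriv h x < 0
  hpos : ∀ x, a < x → 0 < deriv h x
  hint : IntegrableOn (fun y => |deriv h y| * Real.exp ((2 * μ / σ ^ 2) * (y - a))) (Set.Iic a)

namespace Hyp

variable {μ σ a : ℝ} {h : ℝ → ℝ} (H : Hyp μ σ a h)
include H

noncomputable def lam (μ σ : ℝ) : ℝ := 2 * μ / σ ^ 2

local notation "l" => lam μ σ

noncomputable def Kfun (μ σ a : ℝ) (h : ℝ → ℝ) (x : ℝ) : ℝ :=
  ∫ y in a..x, h y * Real.exp (lam μ σ * (y - a))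

noncomputable def qfun (μ σ a : ℝ) (h : ℝ → ℝ) (y : ℝ) : ℝ :=
  deriv h y * Real.exp (lam μ σ * (y - a))

local notation "K" => Kfun μ σ a h
local notation "q" => qfun μ σ a h

theorem lam_pos : 0 < l := by
  have := H.hμ; have := H.hσ
  exact div_pos (by linarith) (by positivity)

theorem gfun_eq (A B x : ℝ) :
    gfun μ σ a h A B x = A - Real.exp (-l * (x - a)) * (B + l / μ * K x) := by
  have : (∫ y in a..x, h y * Real.exp (-(2 * μ / σ ^ 2) * (x - y)))
      = Real.exp (-l * (x - a)) * K x := by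
    rw [Kfun, ← intervalIntegral.integral_const_mul]
    apply intervalIntegral.integral_congr
    intro y _
    have he : -(2 * μ / σ ^ 2) * (x - y) = (-l * (x - a)) + (l * (y - a)) := by
      show -(2 * μ / σ ^ 2) * (x - y) = (-(2 * μ / σ ^ 2) * (x - a)) + ((2 * μ / σ ^ 2) * (y - a))
      ring
    show h y * Real.exp (-(2 * μ / σ ^ 2) * (x - y)) = _
    rw [he, Real.exp_add]; ring
  rw [gfun, this]
  show A - B * Real.exp (-l * (x - a)) - l / μ * (Real.exp (-l * (x - a)) * K x) = _
  ring

theorem q_meas : Measurable q := by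
  exact (measurable_deriv h).mul (by fun_prop)

theorem q_int_left : IntegrableOn q (Set.Iic a) := by
  refine H.hint.mono' H.q_meas.aestronglyMeasurable (ae_of_all _ fun y => ?_)
  simp only [qfun, Real.norm_eq_abs, abs_mul, Real.abs_exp, lam]
  exact le_refl _

theorem deriv_mono_right : MonotoneOn (deriv h) (Set.Ioi a) := by
  refine ConvexOn.monotoneOn_deriv (H.hconv.subset (Set.subset_univ _) (convex_Ioi a)) ?_
  intro x hx
  exact (H.hC2 x (ne_of_gt hx)).differentiableAt (by norm_num)

theorem q_int_right (b : ℝ) : IntegrableOn q (Set.Ioc a b) := by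
  rcases le_or_gt b a with hb | hb
  · rw [Set.Ioc_eq_empty (by exact fun hc => absurd (hc.trans_le hb) (lt_irrefl a))]
    exact integrableOn_empty
  · have hmem : (b : ℝ) ∈ Set.Ioi a := hb
    set C : ℝ := deriv h b * Real.exp (l * (b - a)) with hC
    refine Integrable.mono' (g := fun _ => C) (integrableOn_const measure_Ioc_lt_top.ne) ?_ ?_
    · exact H.q_meas.aestronglyMeasurable
    · rw [ae_restrict_iff' measurableSet_Ioc]
      refine ae_of_all _ fun y hy => ?_
      have hy1 : a < y := hy.1
      have hy2 : y ≤ b := hy.2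
      have h1 : 0 < deriv h y := H.hpos y hy1
      have h2 : deriv h y ≤ deriv h b := H.deriv_mono_right hy1 hmem hy2
      have h3 : Real.exp (l * (y - a)) ≤ Real.exp (l * (b - a)) :=
        Real.exp_le_exp.2 (by nlinarith [H.lam_pos])
      rw [Real.norm_eq_abs, qfun, abs_mul, Real.abs_exp, abs_of_pos h1]
      exact mul_le_mul h2 h3 (Real.exp_pos _).le (le_trans h1.le h2)

theorem q_ii (c d : ℝ) : IntervalIntegrable q volume c d := by
  apply IntegrableOn.intervalIntegrable
  have : Set.uIcc c d ⊆ Set.Iic a ∪ Set.Ioc a (max c d) := by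
    intro y hy
    rcases le_or_gt y a with h1 | h1
    · exact Or.inl h1
    · exact Or.inr ⟨h1, (hy.2 : y ≤ max c d)⟩
  exact (H.q_int_left.union (H.q_int_right (max c d))).mono_set this

theorem q_contAt {x : ℝ} (hx : x ≠ a) : ContinuousAt q x := by
  obtain ⟨u, hu, hcd⟩ := (H.hC2 x hx).contDiffOn (le_refl 2) (by norm_num)
  obtain ⟨t, htu, ht, hxt⟩ := mem_nhds_iff.mp hu
  have : ContinuousOn (deriv h) t :=
    ((hcd.mono htu).continuousOn_deriv_of_isOpen ht (by norm_num))
  have hc : ContinuousAt (deriv h) x := this.continuousAt (ht.mem_nhds hxt)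
  exact hc.mul (by fun_prop)

end Hyp

namespace Hyp

variable {μ σ a : ℝ} {h : ℝ → ℝ} (H : Hyp μ σ a h)
include H

local notation "l" => lam μ σ
local notation "K" => Kfun μ σ a h
local notation "q" => qfun μ σ a h

theorem K_hasDeriv (x : ℝ) : HasDerivAt K (h x * Real.exp (l * (x - a))) x := by
  have hc : Continuous fun y => h y * Real.exp (l * (y - a)) := by
    exact H.hcont.mul (by fun_prop)
  exact intervalIntegral.integral_hasDerivAt_right (hc.intervalIntegrable a x)
    hc.aestronglyMeasurable.stronglyMeasurableAtFilter hc.continuousAt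

theorem K_cont : Continuous K :=
  Differentiable.continuous (fun x => (H.K_hasDeriv x).differentiableAt)

theorem h_hasDeriv {y : ℝ} (hy : y ≠ a) : HasDerivAt h (deriv h y) y :=
  ((H.hC2 y hy).differentiableAt (by norm_num)).hasDerivAt

/-- Integration by parts identity. -/
theorem q_integral (x : ℝ) :
    (∫ y in a..x, q y) = h x * Real.exp (l * (x - a)) - l * K x := by
  set P : ℝ → ℝ := fun y => h y * Real.exp (l * (y - a)) - l * K y with hP
  have hPc : Continuous P := by
    exact (H.hcont.mul (by fun_prop)).sub (continuous_const.mul H.K_cont)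
  have hPd : ∀ y : ℝ, y ≠ a → HasDerivAt P (q y) y := by
    intro y hy
    have h1 : HasDerivAt (fun y => Real.exp (l * (y - a))) (l * Real.exp (l * (y - a))) y := by
      have : HasDerivAt (fun y : ℝ => l * (y - a)) l y :=
        (((hasDerivAt_id y).sub_const a).const_mul l).congr_deriv (mul_one l)
      simpa [mul_comm] using this.exp
    have h2 := (H.h_hasDeriv hy).mul h1
    have h3 := h2.sub ((H.K_hasDeriv y).const_mul l)
    refine h3.congr_deriv ?_
    simp only [qfun]
    ring
  have hPa : P a = 0 := by
    simp [hP, Kfun, intervalIntegral.integral_same, H.ha]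
  rcases le_total a x with hax | hxa
  · have := intervalIntegral.integral_eq_sub_of_hasDeriv_right_of_le hax
      hPc.continuousOn (fun y hy => (hPd y (ne_of_gt hy.1)).hasDerivWithinAt) (H.q_ii a x)
    rw [this, hPa, sub_zero]
  · have h0 := intervalIntegral.integral_eq_sub_of_hasDeriv_right_of_le hxa
      hPc.continuousOn (fun y hy => (hPd y (ne_of_lt hy.2)).hasDerivWithinAt) (H.q_ii x a)
    rw [intervalIntegral.integral_symm, h0, hPa]
    ring

end Hyp

namespace Hyp

variable {μ σ a : ℝ} {h : ℝ → ℝ} (H : Hyp μ σ a h)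
include H

local notation "l" => lam μ σ
local notation "K" => Kfun μ σ a h
local notation "q" => qfun μ σ a h

theorem F1_def' (B x : ℝ) : F1 μ σ a h B x = B - 1 / μ * ∫ y in a..x, q y := rfl

theorem F1_eq (B x : ℝ) :
    F1 μ σ a h B x = B - 1 / μ * (h x * Real.exp (l * (x - a)) - l * K x) := by
  rw [H.F1_def', H.q_integral]

theorem F1_cont (B : ℝ) : Continuous (F1 μ σ a h B) := by
  have : (F1 μ σ a h B) = fun x => B - 1 / μ * (h x * Real.exp (l * (x - a)) - l * K x) :=
    funext fun x => H.F1_eq B x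
  rw [this]
  exact continuous_const.sub (continuous_const.mul
    ((H.hcont.mul (by fun_prop)).sub (continuous_const.mul H.K_cont)))

theorem F1_hasDeriv {B x : ℝ} (hx : x ≠ a) :
    HasDerivAt (F1 μ σ a h B) (-(1 / μ) * q x) x := by
  have h1 : HasDerivAt (fun u => ∫ y in a..u, q y) (q x) x :=
    intervalIntegral.integral_hasDerivAt_right (H.q_ii a x)
      (H.q_meas.aestronglyMeasurable.stronglyMeasurableAtFilter) (H.q_contAt hx)
  have h2 := (h1.const_mul (1 / μ)).const_sub B
  refine h2.congr_deriv ?_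
  ring

theorem F1_strictMono (B : ℝ) : StrictMonoOn (F1 μ σ a h B) (Set.Iic a) := by
  apply strictMonoOn_of_deriv_pos (convex_Iic a) (H.F1_cont B).continuousOn
  intro x hx
  rw [interior_Iic] at hx
  rw [(H.F1_hasDeriv (ne_of_lt hx)).deriv]
  have h1 : deriv h x < 0 := H.hneg x hx
  have := H.hμ
  have he : (0:ℝ) < Real.exp (l * (x - a)) := Real.exp_pos _
  rw [qfun]
  have : deriv h x * Real.exp (l * (x - a)) < 0 := mul_neg_of_neg_of_pos h1 he
  nlinarith [one_div_pos.2 H.hμ]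

theorem F1_strictAnti (B : ℝ) : StrictAntiOn (F1 μ σ a h B) (Set.Ici a) := by
  apply strictAntiOn_of_deriv_neg (convex_Ici a) (H.F1_cont B).continuousOn
  intro x hx
  rw [interior_Ici] at hx
  rw [(H.F1_hasDeriv (ne_of_gt hx)).deriv]
  have h1 : 0 < deriv h x := H.hpos x hx
  have he : (0:ℝ) < Real.exp (l * (x - a)) := Real.exp_pos _
  rw [qfun]
  have : 0 < deriv h x * Real.exp (l * (x - a)) := mul_pos h1 he
  nlinarith [one_div_pos.2 H.hμ]

theorem gfun_hasDeriv (A B x : ℝ) :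
    HasDerivAt (gfun μ σ a h A B) (l * Real.exp (-l * (x - a)) * F1 μ σ a h B x) x := by
  have hg : gfun μ σ a h A B = fun x => A - Real.exp (-l * (x - a)) * (B + l / μ * K x) :=
    funext fun x => H.gfun_eq A B x
  rw [hg]
  have h1 : HasDerivAt (fun x : ℝ => Real.exp (-l * (x - a))) (-l * Real.exp (-l * (x - a))) x := by
    have h0 : HasDerivAt (fun y : ℝ => -l * (y - a)) (-l) x := by
      simpa using ((hasDerivAt_id x).sub_const a).const_mul (-l)
    simpa [mul_comm] using h0.exp
  have h2 : HasDerivAt (fun x => B + l / μ * K x) (l / μ * (h x * Real.exp (l * (x - a)))) x :=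
    ((H.K_hasDeriv x).const_mul (l / μ)).const_add B
  have h3 := (h1.mul h2).const_sub A
  refine h3.congr_deriv ?_
  rw [H.F1_eq]
  ring

end Hyp

namespace Hyp

variable {μ σ a : ℝ} {h : ℝ → ℝ} (H : Hyp μ σ a h)
include H

local notation "l" => lam μ σ
local notation "K" => Kfun μ σ a h
local notation "q" => qfun μ σ a h

theorem deriv_contAt {x : ℝ} (hx : x ≠ a) : ContinuousAt (deriv h) x := by
  obtain ⟨u, hu, hcd⟩ := (H.hC2 x hx).contDiffOn (le_refl 2) (by norm_num)
  obtain ⟨t, htu, ht, hxt⟩ := mem_nhds_iff.mp hu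
  exact ((hcd.mono htu).continuousOn_deriv_of_isOpen ht (by norm_num)).continuousAt
    (ht.mem_nhds hxt)

theorem g_cont (A B : ℝ) : Continuous (gfun μ σ a h A B) :=
  Differentiable.continuous fun x => (H.gfun_hasDeriv A B x).differentiableAt

omit H in
theorem gfun_sub (A A' B B' x : ℝ) :
    gfun μ σ a h A B x - gfun μ σ a h A' B' x
      = (A - A') - (B - B') * Real.exp (-l * (x - a)) := by
  simp only [gfun, lam]; ring

omit H in
theorem F1_sub (B B' x : ℝ) : F1 μ σ a h B x - F1 μ σ a h B' x = B - B' := by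
  simp only [F1]; ring

theorem gfun_critical {A B x : ℝ} (hF : F1 μ σ a h B x = 0) :
    gfun μ σ a h A B x = A - h x / μ := by
  have hμ' : (μ:ℝ) ≠ 0 := H.hμ.ne'
  have h2 : B - 1 / μ * (h x * Real.exp (l * (x - a)) - l * K x) = 0 := by
    rw [← H.F1_eq, hF]
  have hE : Real.exp (-l * (x - a)) * Real.exp (l * (x - a)) = 1 := by
    rw [← Real.exp_add]; norm_num
  rw [H.gfun_eq]
  have hB : B + l / μ * K x = h x * Real.exp (l * (x - a)) / μ := by
    field_simp at h2 ⊢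
    linarith
  rw [hB, show Real.exp (-l * (x - a)) * (h x * Real.exp (l * (x - a)) / μ)
      = h x * (Real.exp (-l * (x - a)) * Real.exp (l * (x - a))) / μ by ring, hE, mul_one]

section Zeros

variable {B p1 p2 : ℝ} (h1a : p1 < a) (hF1 : F1 μ σ a h B p1 = 0)
  (h2a : a < p2) (hF2 : F1 μ σ a h B p2 = 0)
include h1a hF1 h2a hF2

theorem F1_pos_on : ∀ x, p1 < x → x < p2 → 0 < F1 μ σ a h B x := by
  intro x hx1 hx2
  rcases le_total x a with hxa | hxa
  · have := (H.F1_strictMono B) (le_of_lt (lt_of_lt_of_le hx1 hxa) : p1 ∈ Set.Iic a) hxa hx1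
    rwa [hF1] at this
  · have := (H.F1_strictAnti B) hxa (le_of_lt (lt_of_le_of_lt hxa hx2) : p2 ∈ Set.Ici a) hx2
    rwa [hF2] at this

omit h1a hF1 in
theorem F1_neg_right : ∀ x, p2 < x → F1 μ σ a h B x < 0 := by
  intro x hx
  have := (H.F1_strictAnti B) h2a.le (le_trans h2a.le hx.le : x ∈ Set.Ici a) hx
  rwa [hF2] at this

theorem g_mono (A : ℝ) : StrictMonoOn (gfun μ σ a h A B) (Set.Icc p1 p2) := by
  apply strictMonoOn_of_deriv_pos (convex_Icc p1 p2) (H.g_cont A B).continuousOn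
  intro x hx
  rw [interior_Icc] at hx
  rw [(H.gfun_hasDeriv A B x).deriv]
  exact mul_pos (mul_pos (H.lam_pos) (Real.exp_pos _)) (H.F1_pos_on h1a hF1 h2a hF2 x hx.1 hx.2)

omit h1a hF1 in
theorem g_anti (A : ℝ) : StrictAntiOn (gfun μ σ a h A B) (Set.Ici p2) := by
  apply strictAntiOn_of_deriv_neg (convex_Ici p2) (H.g_cont A B).continuousOn
  intro x hx
  rw [interior_Ici] at hx
  rw [(H.gfun_hasDeriv A B x).deriv]
  exact mul_neg_of_pos_of_neg (mul_pos (H.lam_pos) (Real.exp_pos _))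
    (H.F1_neg_right h2a hF2 x hx)

end Zeros

theorem zero_lt_left {B B' p p' : ℝ} (hBB : B < B') (hp : p < a) (hp' : p' < a)
    (hF : F1 μ σ a h B p = 0) (hF' : F1 μ σ a h B' p' = 0) : p' < p := by
  have h1 : F1 μ σ a h B' p' < F1 μ σ a h B' p := by
    have := F1_sub (μ := μ) (σ := σ) (a := a) (h := h) B' B p
    rw [hF', hF] at *
    linarith [this]
  exact ((H.F1_strictMono B').lt_iff_lt hp'.le hp.le).1 h1

theorem zero_lt_right {B B' p p' : ℝ} (hBB : B < B') (hp : a < p) (hp' : a < p')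
    (hF : F1 μ σ a h B p = 0) (hF' : F1 μ σ a h B' p' = 0) : p < p' := by
  have h1 : F1 μ σ a h B' p' < F1 μ σ a h B' p := by
    have := F1_sub (μ := μ) (σ := σ) (a := a) (h := h) B' B p
    rw [hF', hF] at *
    linarith [this]
  exact ((H.F1_strictAnti B').lt_iff_gt hp'.le hp.le).1 h1

end Hyp

namespace Hyp

variable {μ σ a : ℝ} {h : ℝ → ℝ} (H : Hyp μ σ a h)
include H

local notation "l" => lam μ σ
local notation "q" => qfun μ σ a h

theorem deriv_h_ii {c d : ℝ} (hcd : c ≤ d) (hside : d < a ∨ a < c) :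
    IntervalIntegrable (deriv h) volume c d := by
  apply ContinuousOn.intervalIntegrable
  intro y hy
  rw [Set.uIcc_of_le hcd] at hy
  have hya : y ≠ a := by
    rcases hside with hs | hs
    · exact ne_of_lt (lt_of_le_of_lt hy.2 hs)
    · exact ne_of_gt (lt_of_lt_of_le hs hy.1)
  exact (H.deriv_contAt hya).continuousWithinAt

theorem deriv_h_integral {c d : ℝ} (hcd : c ≤ d) (hside : d < a ∨ a < c) :
    (∫ y in c..d, deriv h y) = h d - h c := by
  rcases eq_or_lt_of_le hcd with rfl | hlt
  · simp
  · apply intervalIntegral.integral_eq_sub_of_hasDeriv_right_of_le hcd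
      H.hcont.continuousOn
    · intro y hy
      have hya : y ≠ a := by
        rcases hside with hs | hs
        · exact ne_of_lt (lt_trans hy.2 hs)
        · exact ne_of_gt (lt_trans hs hy.1)
      exact (H.h_hasDeriv hya).hasDerivWithinAt
    · exact H.deriv_h_ii hcd hside

theorem int_q_eq {B B' p p' : ℝ} (hF : F1 μ σ a h B p = 0) (hF' : F1 μ σ a h B' p' = 0) :
    (∫ y in p'..p, q y) = μ * B - μ * B' := by
  have hμ' : (μ:ℝ) ≠ 0 := H.hμ.ne'
  have e1 : (∫ y in a..p, q y) = μ * B := by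
    have := hF
    rw [H.F1_def'] at this
    field_simp at this
    linarith
  have e2 : (∫ y in a..p', q y) = μ * B' := by
    have := hF'
    rw [H.F1_def'] at this
    field_simp at this
    linarith
  have adj : (∫ y in a..p', q y) + (∫ y in p'..p, q y) = ∫ y in a..p, q y :=
    intervalIntegral.integral_add_adjacent_intervals (H.q_ii a p') (H.q_ii p' p)
  linarith

theorem left_ineq {B B' p p' : ℝ} (hBB : B < B') (hp : p < a) (hp' : p' < a)
    (hF : F1 μ σ a h B p = 0) (hF' : F1 μ σ a h B' p' = 0) :
    (B' - B) * Real.exp (-l * (p - a)) ≤ h p' / μ - h p / μ := by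
  have hpp : p' < p := H.zero_lt_left hBB hp hp' hF hF'
  have hq := H.int_q_eq hF hF'
  have hder := H.deriv_h_integral hpp.le (Or.inl hp)
  have hmono : (∫ y in p'..p, deriv h y)
      ≤ ∫ y in p'..p, q y * Real.exp (-l * (p - a)) := by
    apply intervalIntegral.integral_mono_on hpp.le (H.deriv_h_ii hpp.le (Or.inl hp))
      ((H.q_ii p' p).mul_const _)
    intro y hy
    have hy1 : deriv h y < 0 := H.hneg y (lt_of_le_of_lt hy.2 hp)
    have hee : Real.exp (l * (y - a)) * Real.exp (-l * (p - a)) = Real.exp (l * (y - p)) := by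
      rw [← Real.exp_add]; ring_nf
    have hle1 : Real.exp (l * (y - p)) ≤ 1 := by
      rw [show (1:ℝ) = Real.exp 0 by simp]
      exact Real.exp_le_exp.2 (mul_nonpos_of_nonneg_of_nonpos H.lam_pos.le (by linarith [hy.2]))
    rw [qfun, mul_assoc, hee]
    nlinarith
  rw [intervalIntegral.integral_mul_const, hq] at hmono
  rw [hder] at hmono
  have := H.hμ
  rw [div_sub_div_same, le_div_iff₀ this]
  nlinarith

theorem right_ineq {B B' p p' : ℝ} (hBB : B < B') (hp : a < p) (hp' : a < p')
    (hF : F1 μ σ a h B p = 0) (hF' : F1 μ σ a h B' p' = 0) :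
    h p' / μ - h p / μ ≤ (B' - B) * Real.exp (-l * (p - a)) := by
  have hpp : p < p' := H.zero_lt_right hBB hp hp' hF hF'
  have hq := H.int_q_eq hF' hF
  have hder := H.deriv_h_integral hpp.le (Or.inr hp)
  have hmono : (∫ y in p..p', deriv h y)
      ≤ ∫ y in p..p', q y * Real.exp (-l * (p - a)) := by
    apply intervalIntegral.integral_mono_on hpp.le (H.deriv_h_ii hpp.le (Or.inr hp))
      ((H.q_ii p p').mul_const _)
    intro y hy
    have hy1 : 0 < deriv h y := H.hpos y (lt_of_lt_of_le hp hy.1)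
    have hee : Real.exp (l * (y - a)) * Real.exp (-l * (p - a)) = Real.exp (l * (y - p)) := by
      rw [← Real.exp_add]; ring_nf
    have hle1 : (1:ℝ) ≤ Real.exp (l * (y - p)) := by
      rw [show (1:ℝ) = Real.exp 0 by simp]
      exact Real.exp_le_exp.2 (mul_nonneg H.lam_pos.le (by linarith [hy.1]))
    rw [qfun, mul_assoc, hee]
    nlinarith
  rw [intervalIntegral.integral_mul_const, hq] at hmono
  rw [hder] at hmono
  have := H.hμ
  rw [div_sub_div_same, div_le_iff₀ this]
  nlinarith

end Hyp

namespace Hyp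

variable {μ σ a : ℝ} {h : ℝ → ℝ} (H : Hyp μ σ a h)
include H

section Shape

variable {B p1 p2 ℓ A U u : ℝ}
  (hp1 : p1 < a) (hF1 : F1 μ σ a h B p1 = 0) (hp2 : a < p2) (hF2 : F1 μ σ a h B p2 = 0)
  (hU1 : p1 < U) (hU2 : U < p2) (hu2 : p2 < u)
  (hgU : gfun μ σ a h A B U = ℓ) (hgu : gfun μ σ a h A B u = ℓ)

include hp1 hF1 hp2 hF2 hU1 hU2 hu2 hgU hgu

theorem shape_ge : ∀ x ∈ Set.Icc U u, ℓ ≤ gfun μ σ a h A B x := by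
  intro x hx
  rcases le_total x p2 with hc | hc
  · have hmem1 : U ∈ Set.Icc p1 p2 := ⟨hU1.le, hU2.le⟩
    have hmem2 : x ∈ Set.Icc p1 p2 := ⟨le_trans hU1.le hx.1, hc⟩
    have := (H.g_mono hp1 hF1 hp2 hF2 A).monotoneOn hmem1 hmem2 hx.1
    rwa [hgU] at this
  · have hmem1 : x ∈ Set.Ici p2 := hc
    have hmem2 : u ∈ Set.Ici p2 := hu2.le
    have := (H.g_anti hp2 hF2 A).antitoneOn hmem1 hmem2 hx.2
    rwa [hgu] at this

theorem shape_lt_left : ∀ x, p1 ≤ x → x < U → gfun μ σ a h A B x < ℓ := by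
  intro x hx1 hx2
  have hmem1 : x ∈ Set.Icc p1 p2 := ⟨hx1, le_of_lt (lt_trans hx2 hU2)⟩
  have hmem2 : U ∈ Set.Icc p1 p2 := ⟨hU1.le, hU2.le⟩
  have := (H.g_mono hp1 hF1 hp2 hF2 A) hmem1 hmem2 hx2
  rwa [hgU] at this

theorem shape_lt_right : ∀ x, u < x → gfun μ σ a h A B x < ℓ := by
  intro x hx
  have := (H.g_anti hp2 hF2 A) (hu2.le : u ∈ Set.Ici p2)
    (le_of_lt (lt_trans hu2 hx) : x ∈ Set.Ici p2) hx
  rwa [hgu] at this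

end Shape

end Hyp

theorem stmt13 (μ σ a : ℝ) (h : ℝ → ℝ)
    (hμ : 0 < μ) (hσ : 0 < σ)
    (hconv : ConvexOn ℝ Set.univ h)
    (hcont : Continuous h)
    (hnonneg : ∀ x, 0 ≤ h x)
    (ha : h a = 0)
    (hC2 : ∀ x : ℝ, x ≠ a → ContDiffAt ℝ 2 h x)
    (hneg : ∀ x, x < a → deriv h x < 0)
    (hpos : ∀ x, a < x → 0 < deriv h x)
    (hint : IntegrableOn (fun y => |deriv h y| * Real.exp ((2 * μ / σ ^ 2) * (y - a))) (Set.Iic a))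
    (x1 x2 : ℝ → ℝ)
    (hx1 : ∀ B ∈ Set.Ioo 0 (Bbar μ σ a h), x1 B < a ∧ F1 μ σ a h B (x1 B) = 0)
    (hx2 : ∀ B : ℝ, 0 < B → a < x2 B ∧ F1 μ σ a h B (x2 B) = 0)
    (k ℓ : ℝ) (hk : 0 < k) (hl : 0 < ℓ) (B₁ : ℝ)
    (hB₁ : B₁ ∈ Set.Ioo 0 (Bbar μ σ a h) ∧
      gfun μ σ a h 0 B₁ (x2 B₁) - gfun μ σ a h 0 B₁ (x1 B₁) = k + ℓ)
    (Ufun ufun : ℝ → ℝ → ℝ)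
    (hUu : ∀ B ∈ Set.Ioo B₁ (Bbar μ σ a h),
      ∀ A ∈ Set.Ioc (h (x2 B) / μ + ℓ) (h (x1 B) / μ - k),
        x1 B < Ufun A B ∧ Ufun A B < x2 B ∧ x2 B < ufun A B ∧
        gfun μ σ a h A B (Ufun A B) = ℓ ∧ gfun μ σ a h A B (ufun A B) = ℓ ∧
        0 < deriv (gfun μ σ a h A B) (Ufun A B) ∧ deriv (gfun μ σ a h A B) (ufun A B) < 0)
    (L : ℝ) (hL : 0 < L) (B₂ : ℝ)
    (hB₂ : B₂ ∈ Set.Ioo B₁ (Bbar μ σ a h) ∧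
      (∫ x in Ufun (h (x1 B₂) / μ - k) B₂..ufun (h (x1 B₂) / μ - k) B₂,
        (gfun μ σ a h (h (x1 B₂) / μ - k) B₂ x - ℓ)) = L)
    :
    ∀ B ∈ Set.Ico B₂ (Bbar μ σ a h),
      ∃! A : ℝ, A ∈ Set.Ioc (h (x2 B) / μ + ℓ) (h (x1 B) / μ - k) ∧
        (∫ x in Ufun A B..ufun A B, (gfun μ σ a h A B x - ℓ)) = L := by
  
  have H : Hyp μ σ a h := ⟨hμ, hσ, hconv, hcont, hnonneg, ha, hC2, hneg, hpos, hint⟩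
  obtain ⟨hB1mem, hB1eq⟩ := hB₁
  obtain ⟨hB2mem, hB2int⟩ := hB₂
  -- the gap lemma
  have gap : ∀ B' ∈ Set.Ioo B₁ (Bbar μ σ a h),
      h (x2 B') / μ + ℓ < h (x1 B') / μ - k := by
    intro B' hB'
    have h0' : (0:ℝ) < B' := lt_trans hB1mem.1 hB'.1
    obtain ⟨hx1a', hx1F'⟩ := hx1 B' ⟨h0', hB'.2⟩
    obtain ⟨hx2a', hx2F'⟩ := hx2 B' h0'
    obtain ⟨hx1a₁, hx1F₁⟩ := hx1 B₁ hB1mem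
    obtain ⟨hx2a₁, hx2F₁⟩ := hx2 B₁ hB1mem.1
    have key1 := H.left_ineq hB'.1 hx1a₁ hx1a' hx1F₁ hx1F'
    have key2 := H.right_ineq hB'.1 hx2a₁ hx2a' hx2F₁ hx2F'
    rw [H.gfun_critical hx2F₁, H.gfun_critical hx1F₁] at hB1eq
    have hd : 0 < B' - B₁ := by linarith [hB'.1]
    have hee : Real.exp (-(Hyp.lam μ σ) * (x2 B₁ - a)) < Real.exp (-(Hyp.lam μ σ) * (x1 B₁ - a)) := by
      apply Real.exp_lt_exp.2
      nlinarith [H.lam_pos]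
    nlinarith [mul_pos hd (sub_pos.2 hee)]
  -- pointwise comparison of the g-functions at the upper boundary A
  have compare : ∀ B' ∈ Set.Ioo B₁ (Bbar μ σ a h), ∀ B'' ∈ Set.Ioo B₁ (Bbar μ σ a h),
      B' ≤ B'' → ∀ x, x1 B' ≤ x →
      gfun μ σ a h (h (x1 B') / μ - k) B' x ≤ gfun μ σ a h (h (x1 B'') / μ - k) B'' x := by
    intro B' hB' B'' hB'' hle x hx
    rcases eq_or_lt_of_le hle with rfl | hlt
    · exact le_refl _
    have h0' : (0:ℝ) < B' := lt_trans hB1mem.1 hB'.1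
    have h0'' : (0:ℝ) < B'' := lt_trans hB1mem.1 hB''.1
    obtain ⟨hx1a', hx1F'⟩ := hx1 B' ⟨h0', hB'.2⟩
    obtain ⟨hx1a'', hx1F''⟩ := hx1 B'' ⟨h0'', hB''.2⟩
    have key1 := H.left_ineq hlt hx1a' hx1a'' hx1F' hx1F''
    have hsub := Hyp.gfun_sub (μ := μ) (σ := σ) (a := a) (h := h)
      (h (x1 B'') / μ - k) (h (x1 B') / μ - k) B'' B' x
    have hexp : Real.exp (-(Hyp.lam μ σ) * (x - a)) ≤ Real.exp (-(Hyp.lam μ σ) * (x1 B' - a)) :=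
      Real.exp_le_exp.2 (by nlinarith [H.lam_pos])
    have hd : (0:ℝ) < B'' - B' := by linarith
    nlinarith [mul_le_mul_of_nonneg_left hexp hd.le]
  intro B hB
  have hBmem : B ∈ Set.Ioo B₁ (Bbar μ σ a h) := ⟨lt_of_lt_of_le hB2mem.1 hB.1, hB.2⟩
  have hB0 : (0:ℝ) < B := lt_trans hB1mem.1 hBmem.1
  obtain ⟨hp1a, hpF1⟩ := hx1 B ⟨hB0, hBmem.2⟩
  obtain ⟨hp2a, hpF2⟩ := hx2 B hB0
  have hUuB := hUu B hBmem
  have hgap0 := gap B hBmem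
  set Al := h (x2 B) / μ + ℓ with hAldef
  set Ab := h (x1 B) / μ - k with hAbdef
  have hgapB : Al < Ab := hgap0
  clear_value Al Ab
  have hAbmem : Ab ∈ Set.Ioc Al Ab := ⟨hgapB, le_refl _⟩
  -- shift in A
  have gshift : ∀ A A' x : ℝ, gfun μ σ a h A' B x = gfun μ σ a h A B x + (A' - A) := by
    intro A A' x
    have := Hyp.gfun_sub (μ := μ) (σ := σ) (a := a) (h := h) A' A B B x
    rw [sub_self, zero_mul, sub_zero] at this
    linarith
  -- shape: g ≥ ℓ on [U, u]
  have hshape : ∀ A ∈ Set.Ioc Al Ab, ∀ x ∈ Set.Icc (Ufun A B) (ufun A B),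
      ℓ ≤ gfun μ σ a h A B x := by
    intro A hA
    obtain ⟨h1, h2, h3, h4, h5, -, -⟩ := hUuB A hA
    exact H.shape_ge hp1a hpF1 hp2a hpF2 h1 h2 h3 h4 h5
  -- monotonicity of U and u in A
  have hUmono : ∀ A ∈ Set.Ioc Al Ab, ∀ A' ∈ Set.Ioc Al Ab, A ≤ A' →
      Ufun A' B ≤ Ufun A B ∧ ufun A B ≤ ufun A' B := by
    intro A hA A' hA' hle
    rcases eq_or_lt_of_le hle with rfl | hlt
    · exact ⟨le_refl _, le_refl _⟩
    obtain ⟨h1, h2, h3, h4, h5, -, -⟩ := hUuB A hA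
    obtain ⟨h1', h2', h3', h4', h5', -, -⟩ := hUuB A' hA'
    have hgU : gfun μ σ a h A' B (Ufun A B) = ℓ + (A' - A) := by rw [gshift A A', h4]
    have hgu : gfun μ σ a h A' B (ufun A B) = ℓ + (A' - A) := by rw [gshift A A', h5]
    constructor
    · by_contra hcon
      push_neg at hcon
      have := (H.g_mono hp1a hpF1 hp2a hpF2 A') ⟨h1.le, h2.le⟩ ⟨h1'.le, h2'.le⟩ hcon
      rw [h4', hgU] at this
      linarith
    · by_contra hcon
      push_neg at hcon
      have := (H.g_anti hp2a hpF2 A') (h3'.le : ufun A' B ∈ Set.Ici (x2 B))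
        (h3.le : ufun A B ∈ Set.Ici (x2 B)) hcon
      rw [h5', hgu] at this
      linarith
  -- integrability
  have gInt : ∀ (A c' d' : ℝ),
      IntervalIntegrable (fun x => gfun μ σ a h A B x - ℓ) volume c' d' :=
    fun A c' d' => ((H.g_cont A B).sub continuous_const).intervalIntegrable c' d'
  have g2Int : ∀ (c' d' : ℝ),
      IntervalIntegrable (fun x => gfun μ σ a h (h (x1 B₂) / μ - k) B₂ x - ℓ) volume c' d' :=
    fun c' d' => ((H.g_cont _ B₂).sub continuous_const).intervalIntegrable c' d'
  have mInt : ∀ (A c' d' : ℝ),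
      IntervalIntegrable (fun x => max (gfun μ σ a h A B x - ℓ) 0) volume c' d' :=
    fun A c' d' =>
      (((H.g_cont A B).sub continuous_const).max continuous_const).intervalIntegrable c' d'
  -- strict monotonicity of Λ₂ in A
  have hPhiMono : ∀ A ∈ Set.Ioc Al Ab, ∀ A' ∈ Set.Ioc Al Ab, A < A' →
      (∫ x in Ufun A B..ufun A B, (gfun μ σ a h A B x - ℓ)) <
      (∫ x in Ufun A' B..ufun A' B, (gfun μ σ a h A' B x - ℓ)) := by
    intro A hA A' hA' hlt
    obtain ⟨h1, h2, h3, h4, h5, -, -⟩ := hUuB A hA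
    obtain ⟨h1', h2', h3', h4', h5', -, -⟩ := hUuB A' hA'
    obtain ⟨hUle, hule⟩ := hUmono A hA A' hA' hlt.le
    have e1 := intervalIntegral.integral_add_adjacent_intervals
      (gInt A' (Ufun A' B) (Ufun A B)) (gInt A' (Ufun A B) (ufun A B))
    have e2 := intervalIntegral.integral_add_adjacent_intervals
      (gInt A' (Ufun A' B) (ufun A B)) (gInt A' (ufun A B) (ufun A' B))
    have hn1 : 0 ≤ ∫ x in Ufun A' B..Ufun A B, (gfun μ σ a h A' B x - ℓ) := by
      apply intervalIntegral.integral_nonneg hUle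
      intro x hx
      have := hshape A' hA' x ⟨hx.1, le_trans hx.2 (le_of_lt (lt_trans h2 h3'))⟩
      linarith
    have hn2 : 0 ≤ ∫ x in ufun A B..ufun A' B, (gfun μ σ a h A' B x - ℓ) := by
      apply intervalIntegral.integral_nonneg hule
      intro x hx
      have := hshape A' hA' x ⟨le_trans (le_of_lt (lt_trans h2' h3)) hx.1, hx.2⟩
      linarith
    have hmid : (∫ x in Ufun A B..ufun A B, (gfun μ σ a h A' B x - ℓ))
        = (∫ x in Ufun A B..ufun A B, (gfun μ σ a h A B x - ℓ))
          + (A' - A) * (ufun A B - Ufun A B) := by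
      have hpt : ∀ x : ℝ, gfun μ σ a h A' B x - ℓ = (gfun μ σ a h A B x - ℓ) + (A' - A) :=
        fun x => by rw [gshift A A' x]; ring
      simp only [hpt]
      rw [intervalIntegral.integral_add (gInt A _ _) intervalIntegrable_const,
        intervalIntegral.integral_const, smul_eq_mul]
      ring
    have hprod : 0 < (A' - A) * (ufun A B - Ufun A B) :=
      mul_pos (by linarith) (by linarith [lt_trans h2 h3])
    linarith
  -- representation over the fixed interval [c, d] = [Ufun Ab B, ufun Ab B]
  obtain ⟨hc1, hc2, hd2, hgc, hgd, -, -⟩ := hUuB Ab hAbmem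
  have hcd : Ufun Ab B ≤ ufun Ab B := le_of_lt (lt_trans hc2 hd2)
  have hrep : ∀ A ∈ Set.Ioc Al Ab,
      (∫ x in Ufun A B..ufun A B, (gfun μ σ a h A B x - ℓ))
        = ∫ x in Ufun Ab B..ufun Ab B, max (gfun μ σ a h A B x - ℓ) 0 := by
    intro A hA
    obtain ⟨h1, h2, h3, h4, h5, -, -⟩ := hUuB A hA
    obtain ⟨hUle, hule⟩ := hUmono A hA Ab hAbmem hA.2
    have e2 := intervalIntegral.integral_add_adjacent_intervals
      (mInt A (Ufun Ab B) (Ufun A B)) (mInt A (Ufun A B) (ufun A B))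
    have e3 := intervalIntegral.integral_add_adjacent_intervals
      (mInt A (Ufun Ab B) (ufun A B)) (mInt A (ufun A B) (ufun Ab B))
    have z1 : (∫ x in Ufun Ab B..Ufun A B, max (gfun μ σ a h A B x - ℓ) 0) = 0 := by
      have hEq : Set.EqOn (fun x => max (gfun μ σ a h A B x - ℓ) 0) (fun _ => (0:ℝ))
          (Set.uIcc (Ufun Ab B) (Ufun A B)) := by
        intro x hx
        rw [Set.uIcc_of_le hUle] at hx
        have hle : gfun μ σ a h A B x ≤ ℓ := by
          rcases eq_or_lt_of_le hx.2 with heq | hlt'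
          · rw [heq, h4]
          · exact le_of_lt (H.shape_lt_left hp1a hpF1 hp2a hpF2 h1 h2 h3 h4 h5 x
              (le_trans hc1.le hx.1) hlt')
        simp [max_eq_right (by linarith : gfun μ σ a h A B x - ℓ ≤ 0)]
      rw [intervalIntegral.integral_congr hEq, intervalIntegral.integral_zero]
    have z2 : (∫ x in ufun A B..ufun Ab B, max (gfun μ σ a h A B x - ℓ) 0) = 0 := by
      have hEq : Set.EqOn (fun x => max (gfun μ σ a h A B x - ℓ) 0) (fun _ => (0:ℝ))
          (Set.uIcc (ufun A B) (ufun Ab B)) := by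
        intro x hx
        rw [Set.uIcc_of_le hule] at hx
        have hle : gfun μ σ a h A B x ≤ ℓ := by
          rcases eq_or_lt_of_le hx.1 with heq | hlt'
          · rw [← heq, h5]
          · exact le_of_lt (H.shape_lt_right hp1a hpF1 hp2a hpF2 h1 h2 h3 h4 h5 x hlt')
        simp [max_eq_right (by linarith : gfun μ σ a h A B x - ℓ ≤ 0)]
      rw [intervalIntegral.integral_congr hEq, intervalIntegral.integral_zero]
    have mid : (∫ x in Ufun A B..ufun A B, max (gfun μ σ a h A B x - ℓ) 0)
        = ∫ x in Ufun A B..ufun A B, (gfun μ σ a h A B x - ℓ) := by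
      apply intervalIntegral.integral_congr
      intro x hx
      rw [Set.uIcc_of_le (le_of_lt (lt_trans h2 h3))] at hx
      exact max_eq_left (by linarith [hshape A hA x hx])
    linarith
  -- upper bound for Ψ near Al
  have hPsiUB : ∀ A ∈ Set.Ioc Al Ab,
      (∫ x in Ufun Ab B..ufun Ab B, max (gfun μ σ a h A B x - ℓ) 0)
        ≤ (A - Al) * (ufun Ab B - Ufun Ab B) := by
    intro A hA
    have hAA : 0 ≤ A - Al := by linarith [hA.1]
    have hG2 : gfun μ σ a h 0 B (x2 B) = 0 - h (x2 B) / μ := H.gfun_critical hpF2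
    have hpt : ∀ x ∈ Set.Icc (Ufun Ab B) (ufun Ab B),
        max (gfun μ σ a h A B x - ℓ) 0 ≤ A - Al := by
      intro x hx
      have hGle : gfun μ σ a h 0 B x ≤ gfun μ σ a h 0 B (x2 B) := by
        rcases le_total x (x2 B) with hc' | hc'
        · exact (H.g_mono hp1a hpF1 hp2a hpF2 0).monotoneOn
            ⟨le_trans hc1.le hx.1, hc'⟩ ⟨le_of_lt (lt_trans hp1a hp2a), le_refl _⟩ hc'
        · exact (H.g_anti hp2a hpF2 0).antitoneOn (le_refl (x2 B) : x2 B ∈ Set.Ici (x2 B))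
            (hc' : x ∈ Set.Ici (x2 B)) hc'
      have hshift := gshift 0 A x
      apply max_le _ hAA
      rw [hAldef]
      linarith [hGle, hG2, hshift]
    have := intervalIntegral.integral_mono_on hcd (mInt A _ _) intervalIntegrable_const hpt
    rwa [intervalIntegral.integral_const, smul_eq_mul, mul_comm] at this
  -- Lipschitz continuity of Ψ
  have hPsiPair : ∀ A A' : ℝ, A ≤ A' →
      (∫ x in Ufun Ab B..ufun Ab B, max (gfun μ σ a h A B x - ℓ) 0)
        ≤ (∫ x in Ufun Ab B..ufun Ab B, max (gfun μ σ a h A' B x - ℓ) 0)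
      ∧ (∫ x in Ufun Ab B..ufun Ab B, max (gfun μ σ a h A' B x - ℓ) 0)
        ≤ (∫ x in Ufun Ab B..ufun Ab B, max (gfun μ σ a h A B x - ℓ) 0)
          + (A' - A) * (ufun Ab B - Ufun Ab B) := by
    intro A A' hle
    constructor
    · apply intervalIntegral.integral_mono_on hcd (mInt A _ _) (mInt A' _ _)
      intro x hx
      have := gshift A A' x
      exact max_le_max (by linarith) (le_refl 0)
    · have key : ∀ x ∈ Set.Icc (Ufun Ab B) (ufun Ab B),
          max (gfun μ σ a h A' B x - ℓ) 0 ≤ max (gfun μ σ a h A B x - ℓ) 0 + (A' - A) := by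
        intro x hx
        have hsh := gshift A A' x
        apply max_le
        · have hmx : gfun μ σ a h A B x - ℓ ≤ max (gfun μ σ a h A B x - ℓ) 0 := le_max_left _ _
          linarith
        · have hmx : (0:ℝ) ≤ max (gfun μ σ a h A B x - ℓ) 0 := le_max_right _ _
          linarith
      have := intervalIntegral.integral_mono_on hcd (mInt A' _ _)
        ((mInt A _ _).add intervalIntegrable_const) key
      rwa [intervalIntegral.integral_add (mInt A _ _) intervalIntegrable_const,
        intervalIntegral.integral_const, smul_eq_mul, mul_comm (ufun Ab B - Ufun Ab B)] at this
  have hlip : LipschitzWith (Real.toNNReal (ufun Ab B - Ufun Ab B))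
      (fun A => ∫ x in Ufun Ab B..ufun Ab B, max (gfun μ σ a h A B x - ℓ) 0) := by
    apply LipschitzWith.of_dist_le_mul
    intro A A'
    rw [Real.dist_eq, Real.dist_eq,
      Real.coe_toNNReal _ (by linarith [hcd] : (0:ℝ) ≤ ufun Ab B - Ufun Ab B)]
    rcases le_total A A' with hle | hle
    · obtain ⟨m1, m2⟩ := hPsiPair A A' hle
      rw [abs_of_nonpos (by linarith : A - A' ≤ 0), abs_of_nonpos (by linarith)]
      nlinarith
    · obtain ⟨m1, m2⟩ := hPsiPair A' A hle
      rw [abs_of_nonneg (by linarith : (0:ℝ) ≤ A - A'), abs_of_nonneg (by linarith)]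
      nlinarith
  -- lower bound L ≤ Λ₂(Ab, B)
  have hBigger : L ≤ ∫ x in Ufun Ab B..ufun Ab B, (gfun μ σ a h Ab B x - ℓ) := by
    have hA₂mem : (h (x1 B₂) / μ - k) ∈ Set.Ioc (h (x2 B₂) / μ + ℓ) (h (x1 B₂) / μ - k) :=
      ⟨gap B₂ hB2mem, le_refl _⟩
    obtain ⟨j1, j2, j3, j4, j5, -, -⟩ := hUu B₂ hB2mem _ hA₂mem
    have hcmp : ∀ x, x1 B₂ ≤ x →
        gfun μ σ a h (h (x1 B₂) / μ - k) B₂ x ≤ gfun μ σ a h Ab B x := by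
      intro x hx
      have := compare B₂ hB2mem B hBmem hB.1 x hx
      rwa [← hAbdef] at this
    have hx1le : x1 B ≤ x1 B₂ := by
      rcases eq_or_lt_of_le hB.1 with heq | hlt
      · rw [← heq]
      · obtain ⟨i1, i2⟩ := hx1 B₂ ⟨hB1mem.1.trans hB2mem.1, hB2mem.2⟩
        exact (H.zero_lt_left hlt i1 hp1a i2 hpF1).le
    have hcU₂ : Ufun Ab B ≤ Ufun (h (x1 B₂) / μ - k) B₂ := by
      by_contra hcon
      push_neg at hcon
      have hmem1 : Ufun (h (x1 B₂) / μ - k) B₂ ∈ Set.Icc (x1 B) (x2 B) :=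
        ⟨le_trans hx1le j1.le, le_of_lt (lt_trans hcon hc2)⟩
      have hlt2 := (H.g_mono hp1a hpF1 hp2a hpF2 Ab) hmem1 ⟨hc1.le, hc2.le⟩ hcon
      rw [hgc] at hlt2
      have hcmp2 := hcmp _ j1.le
      rw [j4] at hcmp2
      linarith
    have hu₂d : ufun (h (x1 B₂) / μ - k) B₂ ≤ ufun Ab B := by
      by_contra hcon
      push_neg at hcon
      have hlt2 := (H.g_anti hp2a hpF2 Ab) (hd2.le : ufun Ab B ∈ Set.Ici (x2 B))
        (le_of_lt (lt_trans hd2 hcon)) hcon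
      rw [hgd] at hlt2
      have hcmp2 := hcmp _ (le_of_lt (lt_trans j1 (lt_trans j2 j3)))
      rw [j5] at hcmp2
      linarith
    have hU₂u₂ : Ufun (h (x1 B₂) / μ - k) B₂ ≤ ufun (h (x1 B₂) / μ - k) B₂ :=
      le_of_lt (lt_trans j2 j3)
    have e1 := intervalIntegral.integral_add_adjacent_intervals
      (gInt Ab (Ufun Ab B) (Ufun (h (x1 B₂) / μ - k) B₂))
      (gInt Ab (Ufun (h (x1 B₂) / μ - k) B₂) (ufun (h (x1 B₂) / μ - k) B₂))
    have e2 := intervalIntegral.integral_add_adjacent_intervals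
      (gInt Ab (Ufun Ab B) (ufun (h (x1 B₂) / μ - k) B₂))
      (gInt Ab (ufun (h (x1 B₂) / μ - k) B₂) (ufun Ab B))
    have n1 : 0 ≤ ∫ x in Ufun Ab B..Ufun (h (x1 B₂) / μ - k) B₂,
        (gfun μ σ a h Ab B x - ℓ) := by
      apply intervalIntegral.integral_nonneg hcU₂
      intro x hx
      have := hshape Ab hAbmem x ⟨hx.1, le_trans hx.2 (le_trans hU₂u₂ hu₂d)⟩
      linarith
    have n2 : 0 ≤ ∫ x in ufun (h (x1 B₂) / μ - k) B₂..ufun Ab B,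
        (gfun μ σ a h Ab B x - ℓ) := by
      apply intervalIntegral.integral_nonneg hu₂d
      intro x hx
      have := hshape Ab hAbmem x ⟨le_trans hcU₂ (le_trans hU₂u₂ hx.1), hx.2⟩
      linarith
    have mid : (∫ x in Ufun (h (x1 B₂) / μ - k) B₂..ufun (h (x1 B₂) / μ - k) B₂,
          (gfun μ σ a h (h (x1 B₂) / μ - k) B₂ x - ℓ))
        ≤ ∫ x in Ufun (h (x1 B₂) / μ - k) B₂..ufun (h (x1 B₂) / μ - k) B₂,
          (gfun μ σ a h Ab B x - ℓ) := by
      apply intervalIntegral.integral_mono_on hU₂u₂ (g2Int _ _) (gInt Ab _ _)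
      intro x hx
      have := hcmp x (le_trans j1.le hx.1)
      linarith
    linarith [hB2int]
  -- existence via IVT
  have hLAb : L ≤ ∫ x in Ufun Ab B..ufun Ab B, max (gfun μ σ a h Ab B x - ℓ) 0 := by
    rw [← hrep Ab hAbmem]
    exact hBigger
  have hD0 : (0:ℝ) ≤ ufun Ab B - Ufun Ab B := by linarith [hcd]
  obtain ⟨ε, hε0, hεle1, hεle2⟩ : ∃ ε : ℝ, 0 < ε ∧ ε ≤ (Ab - Al) / 2 ∧
      ε ≤ L / (2 * ((ufun Ab B - Ufun Ab B) + 1)) :=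
    ⟨min ((Ab - Al) / 2) (L / (2 * ((ufun Ab B - Ufun Ab B) + 1))),
      lt_min (half_pos (sub_pos.2 hgapB)) (by positivity), min_le_left _ _, min_le_right _ _⟩
  have hA₀mem : Al + ε ∈ Set.Ioc Al Ab := by
    constructor
    · linarith
    · linarith [hgapB, hεle1]
  have hΨA₀ : (∫ x in Ufun Ab B..ufun Ab B, max (gfun μ σ a h (Al + ε) B x - ℓ) 0) < L := by
    have hb := hPsiUB (Al + ε) hA₀mem
    have h1 : ε ≤ L / (2 * ((ufun Ab B - Ufun Ab B) + 1)) := hεle2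
    have h2 : ε * (ufun Ab B - Ufun Ab B)
        ≤ L / (2 * ((ufun Ab B - Ufun Ab B) + 1)) * (ufun Ab B - Ufun Ab B) :=
      mul_le_mul_of_nonneg_right h1 hD0
    have h3 : L / (2 * ((ufun Ab B - Ufun Ab B) + 1)) * (ufun Ab B - Ufun Ab B) < L := by
      rw [div_mul_eq_mul_div, div_lt_iff₀ (by linarith : (0:ℝ) < 2 * ((ufun Ab B - Ufun Ab B) + 1))]
      nlinarith
    have h4 : (Al + ε - Al) * (ufun Ab B - Ufun Ab B) = ε * (ufun Ab B - Ufun Ab B) := by ring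
    linarith [hb]
  obtain ⟨Astar, hAstarIcc, hAstarEq⟩ :=
    intermediate_value_Icc hA₀mem.2 (hlip.continuous.continuousOn) ⟨hΨA₀.le, hLAb⟩
  have hAstarmem : Astar ∈ Set.Ioc Al Ab := ⟨lt_of_lt_of_le hA₀mem.1 hAstarIcc.1, hAstarIcc.2⟩
  refine ⟨Astar, ⟨hAstarmem, ?_⟩, ?_⟩
  · rw [hrep Astar hAstarmem]
    exact hAstarEq
  · rintro A' ⟨hA'mem, hA'int⟩
    by_contra hne
    have hstar : (∫ x in Ufun Astar B..ufun Astar B, (gfun μ σ a h Astar B x - ℓ)) = L := by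
      rw [hrep Astar hAstarmem]; exact hAstarEq
    rcases lt_or_gt_of_ne hne with hlt | hlt
    · have := hPhiMono A' hA'mem Astar hAstarmem hlt
      rw [hA'int, hstar] at this
      exact lt_irrefl L this
    · have := hPhiMono Astar hAstarmem A' hA'mem hlt
      rw [hA'int, hstar] at this
      exact lt_irrefl L this
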